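/- arXiv:0812.1468 — 2 statements merged into one kernel-verified Lean document; each statement's English description precedes it below -/
import Mathlib

section
/- Let A ⋊_α^σ G be a category crossed product with each A_e commutative. Then A is maximal commutative in A ⋊_α^σ G (i.e. A equals its own commutant) if and only if for every object e, every nonidentity s ∈ G_e, and every nonzero a_s ∈ A_e, there exists a ∈ A_e with a_s (σ_s(a) − a) ≠ 0. -/
open CategoryTheory

/-- The type of morphisms of a category `G`, bundled with domain and codomain. -/
abbrev CMor (G : Type*) [Category G] := Σ e f : G, e ⟶ f

/-- Transport along an equality of objects, as a ring homomorphism. -/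
def castRH {G : Type*} (A : G → Type*) [∀ e, Ring (A e)]
    {e f : G} (h : e = f) : A e →+* A f := by subst h; exact RingHom.id _

/-- The carrier of the category crossed product `A ⋊_α^σ G`: finitely supported
formal sums `Σ_s a_s u_s` with `a_s ∈ A_{c(s)}`. -/
abbrev CP {G : Type*} [Category G] (A : G → Type*) [∀ e, Ring (A e)] :=
  Π₀ p : CMor G, A p.2.1

open Classical in
/-- The multiplication of the category crossed product:
`(a u_s)(b u_t) = a σ_s(b) α(s,t) u_{st}` when `d(s) = c(t)`, else `0`. -/
noncomputable def catMul {G : Type*} [Category G] {A : G → Type*} [∀ e, Ring (A e)]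
    (σ : ∀ e f : G, (e ⟶ f) → (A e →+* A f))
    (α : ∀ e f g : G, (f ⟶ g) → (e ⟶ f) → A g)
    (x y : CP A) : CP A :=
  x.sum fun p a => y.sum fun q b =>
    if h : q.2.1 = p.1 then
      DFinsupp.single (⟨q.1, p.2.1, (q.2.2 ≫ eqToHom h) ≫ p.2.2⟩ : CMor G)
        (a * σ p.1 p.2.1 p.2.2 (castRH A h b) * α q.1 p.1 p.2.1 p.2.2 (q.2.2 ≫ eqToHom h))
    else 0

open Classical in
/-- `a u_s`, the formal sum supported on a single morphism. -/
noncomputable def catSingle {G : Type*} [Category G] {A : G → Type*} [∀ e, Ring (A e)]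
    (p : CMor G) (a : A p.2.1) : CP A := DFinsupp.single p a


/-- if each `A_e` is commutative, then `A` is maximal commutative
in `A ⋊_α^σ G` (its commutant is contained in `A`) iff for every object `e`,
every nonidentity `s ∈ G_e` and every nonzero `a_s ∈ A_e` there is `a ∈ A_e`
with `a_s (σ_s(a) - a) ≠ 0`. -/
@[simp] lemma castRH_rfl {G : Type*} (A : G → Type*) [∀ e, Ring (A e)] {e : G} :
    castRH A (rfl : e = e) = RingHom.id _ := rfl

lemma sum_single_apply' {ι : Type*} {β : ι → Type*} [∀ i, AddCommMonoid (β i)]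
    [∀ i (x : β i), Decidable (x ≠ 0)] [DecidableEq ι]
    (x : Π₀ i, β i) (c : ∀ i, β i → β i) (hc : ∀ i, c i 0 = 0) (r : ι) :
    (x.sum fun p ap => DFinsupp.single p (c p ap)) r = c r (x r) := by
  rw [DFinsupp.sum_apply, DFinsupp.sum]
  by_cases hr : r ∈ x.support
  · rw [Finset.sum_eq_single r]
    · simp
    · intro p _ hpr; exact DFinsupp.single_eq_of_ne hpr.symm
    · intro h; exact absurd hr h
  · rw [Finset.sum_eq_zero]
    · rw [DFinsupp.notMem_support_iff.mp hr, hc]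
    · intro p hp; exact DFinsupp.single_eq_of_ne (fun h => hr (h ▸ hp))

open Classical in
lemma L1 {G : Type*} [Category G] {A : G → Type*} [∀ e, CommRing (A e)]
    (σ : ∀ e f : G, (e ⟶ f) → (A e →+* A f))
    (α : ∀ e f g : G, (f ⟶ g) → (e ⟶ f) → A g)
    (hα1r : ∀ (e f : G) (s : e ⟶ f), α e e f s (𝟙 e) = 1)
    (x : CP A) (e : G) (a : A e) (r : CMor G) :
    (catMul σ α x (catSingle (A := A) ⟨e, e, 𝟙 e⟩ a)) r
      = if h : e = r.1 then x r * σ r.1 r.2.1 r.2.2 (castRH A h a) else 0 := by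
  have key : catMul σ α x (catSingle (A := A) ⟨e, e, 𝟙 e⟩ a)
      = x.sum fun p ap => DFinsupp.single p
          (if h : e = p.1 then ap * σ p.1 p.2.1 p.2.2 (castRH A h a) else 0) := by
    unfold catMul catSingle
    congr 1
    funext p ap
    rw [DFinsupp.sum_single_index (by split <;> simp)]
    obtain ⟨pd, pc, pm⟩ := p
    by_cases h : e = pd
    · subst h
      simp only [eqToHom_refl, Category.comp_id, Category.id_comp, castRH_rfl,
        RingHom.id_apply, hα1r, mul_one]
      rw [dif_pos trivial, dif_pos trivial, show (𝟙 e ≫ 𝟙 e) ≫ pm = pm by simp]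
    · rw [dif_neg h, dif_neg h, DFinsupp.single_zero]
  rw [key, sum_single_apply']
  intro p; split <;> simp

open Classical in
lemma L2 {G : Type*} [Category G] {A : G → Type*} [∀ e, CommRing (A e)]
    (σ : ∀ e f : G, (e ⟶ f) → (A e →+* A f))
    (α : ∀ e f g : G, (f ⟶ g) → (e ⟶ f) → A g)
    (hσ1 : ∀ e : G, σ e e (𝟙 e) = RingHom.id (A e))
    (hα1l : ∀ (e f : G) (s : e ⟶ f), α e f f (𝟙 f) s = 1)
    (x : CP A) (e : G) (a : A e) (r : CMor G) :
    (catMul σ α (catSingle (A := A) ⟨e, e, 𝟙 e⟩ a) x) r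
      = if h : r.2.1 = e then castRH A h.symm a * x r else 0 := by
  have key : catMul σ α (catSingle (A := A) ⟨e, e, 𝟙 e⟩ a) x
      = x.sum fun q bq => DFinsupp.single q
          (if h : q.2.1 = e then castRH A h.symm a * bq else 0) := by
    unfold catMul catSingle
    rw [DFinsupp.sum_single_index]
    · congr 1
      funext q bq
      obtain ⟨qd, qc, qm⟩ := q
      by_cases h : qc = e
      · subst h
        simp only [eqToHom_refl, Category.comp_id, Category.id_comp, castRH_rfl,
          RingHom.id_apply, hσ1, hα1l, mul_one]
        rw [dif_pos trivial, dif_pos trivial, show (qm ≫ 𝟙 qc) ≫ 𝟙 qc = qm by simp]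
      · rw [dif_neg h, dif_neg h, DFinsupp.single_zero]
    · apply DFinsupp.sum_eq_zero
      intro q; split <;> simp
  rw [key, sum_single_apply']
  intro q; split <;> simp

theorem maximal_commutative_iff
    {G : Type*} [CategoryTheory.Category G] {A : G → Type*} [∀ e, CommRing (A e)]
    (σ : ∀ e f : G, (e ⟶ f) → (A e →+* A f))
    (α : ∀ e f g : G, (f ⟶ g) → (e ⟶ f) → A g)
    (hσ1 : ∀ e : G, σ e e (𝟙 e) = RingHom.id (A e))
    (hα1r : ∀ (e f : G) (s : e ⟶ f), α e e f s (𝟙 e) = 1)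
    (hα1l : ∀ (e f : G) (s : e ⟶ f), α e f f (𝟙 f) s = 1)
    (hcoc : ∀ (e f g h : G) (s : g ⟶ h) (t : f ⟶ g) (r : e ⟶ f),
      α f g h s t * α e f h (t ≫ s) r = σ g h s (α e f g t r) * α e g h s (r ≫ t))
    (htw : ∀ (e f g : G) (s : f ⟶ g) (t : e ⟶ f) (a : A e),
      σ f g s (σ e f t a) * α e f g s t = α e f g s t * σ e g (t ≫ s) a) :
    (∀ x : CP A,
        (∀ (e : G) (a : A e),
          catMul σ α x (catSingle (A := A) ⟨e, e, 𝟙 e⟩ a)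
            = catMul σ α (catSingle (A := A) ⟨e, e, 𝟙 e⟩ a) x) →
        ∀ p : CMor G, (∀ e : G, p ≠ ⟨e, e, 𝟙 e⟩) → x p = 0) ↔
      (∀ (e : G) (s : e ⟶ e), s ≠ 𝟙 e → ∀ b : A e, b ≠ 0 →
        ∃ a : A e, b * (σ e e s a - a) ≠ 0) := by
  classical
  constructor
  · intro hmax e s hs b hb
    by_contra hcon
    push_neg at hcon
    have hba : ∀ a : A e, b * σ e e s a = a * b := by
      intro a
      have h2 : b * σ e e s a - b * a = 0 := by rw [← mul_sub]; exact hcon a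
      rw [sub_eq_zero.mp h2, mul_comm]
    set x : CP A := catSingle (A := A) ⟨e, e, s⟩ b with hx
    have hcomm : ∀ (e' : G) (a : A e'),
        catMul σ α x (catSingle (A := A) ⟨e', e', 𝟙 e'⟩ a)
          = catMul σ α (catSingle (A := A) ⟨e', e', 𝟙 e'⟩ a) x := by
      intro e' a
      ext r
      rw [L1 σ α hα1r, L2 σ α hσ1 hα1l]
      by_cases hr : r = ⟨e, e, s⟩
      · subst hr
        by_cases he : e' = e
        · subst he
          rw [dif_pos rfl, dif_pos rfl]
          have hxv : x ⟨e', e', s⟩ = b := by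
            simp [hx, catSingle]
          simp only [castRH_rfl, RingHom.id_apply, hxv]
          exact hba a
        · rw [dif_neg he, dif_neg (fun h => he h.symm)]
      · have hx0 : x r = 0 := DFinsupp.single_eq_of_ne (fun h => hr h)
        rw [hx0]
        split <;> split <;> simp
    have hnonid : ∀ e'' : G, (⟨e, e, s⟩ : CMor G) ≠ ⟨e'', e'', 𝟙 e''⟩ := by
      intro e'' heq
      simp only [Sigma.mk.inj_iff] at heq
      obtain ⟨h1, h2⟩ := heq
      subst h1
      obtain ⟨-, h3⟩ := Sigma.mk.inj_iff.mp (eq_of_heq h2)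
      exact hs (eq_of_heq h3)
    have hz := hmax x hcomm ⟨e, e, s⟩ hnonid
    have hxv : x ⟨e, e, s⟩ = b := by simp [hx, catSingle]
    exact hb (hxv ▸ hz)
  · intro hcond x hcomm p hp
    obtain ⟨d, c, m⟩ := p
    by_cases hdc : d = c
    · subst hdc
      have hm : m ≠ 𝟙 d := fun h => hp d (by rw [h])
      by_contra hx0
      obtain ⟨a, ha⟩ := hcond d m hm (x ⟨d, d, m⟩) hx0
      apply ha
      have h1 := DFunLike.congr_fun (hcomm d a) ⟨d, d, m⟩
      rw [L1 σ α hα1r, L2 σ α hσ1 hα1l, dif_pos rfl, dif_pos rfl] at h1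
      simp only [castRH_rfl, RingHom.id_apply] at h1
      rw [mul_sub, h1, mul_comm a, sub_self]
    · have h1 := DFunLike.congr_fun (hcomm c 1) ⟨d, c, m⟩
      rw [L1 σ α hα1r, L2 σ α hσ1 hα1l, dif_neg (fun h => hdc h.symm), dif_pos rfl] at h1
      simp only [castRH_rfl, RingHom.id_apply, one_mul] at h1
      exact h1.symm
end

section
/- Let A ⋊_α^σ G be a groupoid crossed product with G having finitely many objects, A commutative and maximal commutative in A ⋊_α^σ G, and such that for every morphism s, α(s, s⁻¹) is not a zero divisor in A_{c(s)}. Then every nonzero twosided ideal of A ⋊_α^σ G has nonzero intersection with A. -/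
open CategoryTheory

/-- `I` is a twosided ideal of the category crossed product `A ⋊_α^σ G`. -/
def IsCrossedIdeal {G : Type*} [Category G] {A : G → Type*} [∀ e, Ring (A e)]
    (σ : ∀ e f : G, (e ⟶ f) → (A e →+* A f))
    (α : ∀ e f g : G, (f ⟶ g) → (e ⟶ f) → A g)
    (I : Set (CP A)) : Prop :=
  (0 : CP A) ∈ I ∧ (∀ x y, x ∈ I → y ∈ I → x + y ∈ I) ∧ (∀ x, x ∈ I → -x ∈ I) ∧
    ∀ x r, x ∈ I → catMul σ α r x ∈ I ∧ catMul σ α x r ∈ I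


section Aux
open Classical
variable {G : Type*} [Groupoid G] {A : G → Type*} [∀ e, CommRing (A e)]
variable (σ : ∀ e f : G, (e ⟶ f) → (A e →+* A f))
variable (α : ∀ e f g : G, (f ⟶ g) → (e ⟶ f) → A g)

@[simp] lemma castRH_rfl_apply {e : G} (a : A e) : castRH A rfl a = a := rfl

lemma catMul_single_right (x : CP A) (q : CMor G) (b : A q.2.1) :
    catMul σ α x (catSingle (A := A) q b)
      = x.sum fun p a =>
          if h : q.2.1 = p.1 then
            DFinsupp.single (⟨q.1, p.2.1, (q.2.2 ≫ eqToHom h) ≫ p.2.2⟩ : CMor G)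
              (a * σ p.1 p.2.1 p.2.2 (castRH A h b)
                * α q.1 p.1 p.2.1 p.2.2 (q.2.2 ≫ eqToHom h))
          else 0 := by
  classical
  unfold catMul catSingle
  refine Finset.sum_congr rfl fun p hp => ?_
  dsimp only
  rw [DFinsupp.sum_single_index]
  split
  · simp
  · rfl

lemma catMul_single_left (p : CMor G) (a : A p.2.1) (y : CP A) :
    catMul σ α (catSingle (A := A) p a) y
      = y.sum fun q b =>
          if h : q.2.1 = p.1 then
            DFinsupp.single (⟨q.1, p.2.1, (q.2.2 ≫ eqToHom h) ≫ p.2.2⟩ : CMor G)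
              (a * σ p.1 p.2.1 p.2.2 (castRH A h b)
                * α q.1 p.1 p.2.1 p.2.2 (q.2.2 ≫ eqToHom h))
          else 0 := by
  classical
  unfold catMul catSingle
  rw [DFinsupp.sum_single_index]
  refine Finset.sum_eq_zero fun q hq => ?_
  dsimp only
  split
  · simp
  · rfl


lemma mul_idsingle_apply (hα1r : ∀ (e f : G) (s : e ⟶ f), α e e f s (𝟙 e) = 1)
    (e : G) (a : A e) (y : CP A) (r : CMor G) :
    (catMul σ α y (catSingle (A := A) ⟨e, e, 𝟙 e⟩ a)) r
      = if h : e = r.1 then y r * σ r.1 r.2.1 r.2.2 (castRH A h a) else 0 := by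
  rw [catMul_single_right, DFinsupp.sum_apply, DFinsupp.sum]
  obtain ⟨r1, r2, rm⟩ := r
  by_cases h : e = r1
  · subst h
    rw [dif_pos rfl]
    rw [Finset.sum_eq_single (⟨e, r2, rm⟩ : CMor G)]
    · rw [dif_pos rfl, show (𝟙 e ≫ eqToHom (rfl : e = e)) = 𝟙 e from by simp,
        Category.id_comp, DFinsupp.single_eq_same]
      simp [hα1r]
    · intro p hp hne
      obtain ⟨p1, p2, pm⟩ := p
      dsimp only
      rcases _root_.em (e = p1) with h' | h'
      · subst h'
        rw [dif_pos rfl, show (𝟙 e ≫ eqToHom (rfl : e = e)) = 𝟙 e from by simp,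
          Category.id_comp]
        exact DFinsupp.single_eq_of_ne hne.symm
      · rw [dif_neg (by exact h')]
        rfl
    · intro hnot
      rw [DFinsupp.notMem_support_iff.mp hnot]
      rw [dif_pos rfl]
      simp
  · rw [dif_neg h]
    refine Finset.sum_eq_zero fun p hp => ?_
    obtain ⟨p1, p2, pm⟩ := p
    dsimp only
    rcases _root_.em (e = p1) with h' | h'
    · subst h'
      rw [dif_pos rfl]
      refine DFinsupp.single_eq_of_ne fun hc => h ?_
      exact (congrArg Sigma.fst hc).symm

    · rw [dif_neg (by exact h')]
      rfl


lemma idsingle_mul_apply (hσ1 : ∀ e : G, σ e e (𝟙 e) = RingHom.id (A e))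
    (hα1l : ∀ (e f : G) (s : e ⟶ f), α e f f (𝟙 f) s = 1)
    (e : G) (a : A e) (y : CP A) (r : CMor G) :
    (catMul σ α (catSingle (A := A) ⟨e, e, 𝟙 e⟩ a) y) r
      = if h : r.2.1 = e then castRH A h.symm a * y r else 0 := by
  rw [catMul_single_left, DFinsupp.sum_apply, DFinsupp.sum]
  obtain ⟨r1, r2, rm⟩ := r
  by_cases h : r2 = e
  · subst h
    rw [dif_pos rfl]
    rw [Finset.sum_eq_single (⟨r1, r2, rm⟩ : CMor G)]
    · rw [dif_pos rfl, show rm ≫ eqToHom (rfl : r2 = r2) = rm from by simp,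
        Category.comp_id, DFinsupp.single_eq_same]
      simp [hσ1, hα1l]
    · intro q hq hne
      obtain ⟨q1, q2, qm⟩ := q
      dsimp only
      rcases _root_.em (q2 = r2) with h' | h'
      · subst h'
        rw [dif_pos rfl, show qm ≫ eqToHom (rfl : q2 = q2) = qm from by simp,
          Category.comp_id]
        exact DFinsupp.single_eq_of_ne hne.symm
      · rw [dif_neg (by exact h')]
        rfl
    · intro hnot
      rw [dif_pos rfl, DFinsupp.notMem_support_iff.mp hnot]
      simp
  · rw [dif_neg h]
    refine Finset.sum_eq_zero fun q hq => ?_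
    obtain ⟨q1, q2, qm⟩ := q
    dsimp only
    rcases _root_.em (q2 = e) with h' | h'
    · subst h'
      rw [dif_pos rfl]
      refine DFinsupp.single_eq_of_ne fun hc => h ?_
      have := congrArg (fun z : CMor G => z.2.1) hc
      exact this
    · rw [dif_neg (by exact h')]
      rfl

lemma mul_invsingle_apply (e f : G) (s : e ⟶ f) (x : CP A) (r : CMor G) :
    (catMul σ α x (catSingle (A := A) ⟨f, e, Groupoid.inv s⟩ 1)) r
      = if h : f = r.1 then
          x ⟨e, r.2.1, (s ≫ eqToHom h) ≫ r.2.2⟩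
            * α f e r.2.1 ((s ≫ eqToHom h) ≫ r.2.2) (Groupoid.inv s)
        else 0 := by
  rw [catMul_single_right, DFinsupp.sum_apply, DFinsupp.sum]
  obtain ⟨r1, r2, rm⟩ := r
  by_cases h : f = r1
  · subst h
    rw [dif_pos rfl, show s ≫ eqToHom (rfl : f = f) = s from by simp]
    rw [Finset.sum_eq_single (⟨e, r2, s ≫ rm⟩ : CMor G)]
    · rw [dif_pos rfl,
        show Groupoid.inv s ≫ eqToHom (rfl : e = e) = Groupoid.inv s from by simp,
        show Groupoid.inv s ≫ s ≫ rm = rm from by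
          rw [← Category.assoc, Groupoid.inv_comp, Category.id_comp],
        DFinsupp.single_eq_same]
      simp
    · intro p hp hne
      obtain ⟨p1, p2, pm⟩ := p
      dsimp only
      rcases _root_.em (e = p1) with h' | h'
      · subst h'
        rw [dif_pos rfl,
          show Groupoid.inv s ≫ eqToHom (rfl : e = e) = Groupoid.inv s from by simp]
        refine DFinsupp.single_eq_of_ne fun hc => hne ?_
        obtain ⟨-, hc2⟩ := Sigma.ext_iff.mp hc
        obtain ⟨h2, hm⟩ := Sigma.ext_iff.mp (eq_of_heq hc2)
        dsimp only at h2 hm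
        subst h2
        have hmm : pm = s ≫ rm := by
          rw [eq_of_heq hm, ← Category.assoc, Groupoid.comp_inv, Category.id_comp]
        rw [hmm]
      · rw [dif_neg (by exact h')]
        rfl
    · intro hnot
      rw [dif_pos rfl, DFinsupp.notMem_support_iff.mp hnot]
      simp
  · rw [dif_neg h]
    refine Finset.sum_eq_zero fun p hp => ?_
    obtain ⟨p1, p2, pm⟩ := p
    dsimp only
    rcases _root_.em (e = p1) with h' | h'
    · subst h'
      rw [dif_pos rfl]
      exact DFinsupp.single_eq_of_ne fun hc => h (congrArg Sigma.fst hc).symm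
    · rw [dif_neg (by exact h')]
      rfl

end Aux

/-- in a groupoid crossed product `A ⋊_α^σ G` (finitely many
objects, each `A_e` commutative, `A` maximal commutative, each `α(s, s⁻¹)` not
a zero divisor), every nonzero twosided ideal meets `A` nontrivially. -/
theorem ideal_meets_coefficients_of_maximal_commutative
    {G : Type*} [Groupoid G] [Finite G] {A : G → Type*} [∀ e, CommRing (A e)]
    (σ : ∀ e f : G, (e ⟶ f) → (A e →+* A f))
    (α : ∀ e f g : G, (f ⟶ g) → (e ⟶ f) → A g)
    (hσ1 : ∀ e : G, σ e e (𝟙 e) = RingHom.id (A e))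
    (hα1r : ∀ (e f : G) (s : e ⟶ f), α e e f s (𝟙 e) = 1)
    (hα1l : ∀ (e f : G) (s : e ⟶ f), α e f f (𝟙 f) s = 1)
    (hcoc : ∀ (e f g h : G) (s : g ⟶ h) (t : f ⟶ g) (r : e ⟶ f),
      α f g h s t * α e f h (t ≫ s) r = σ g h s (α e f g t r) * α e g h s (r ≫ t))
    (htw : ∀ (e f g : G) (s : f ⟶ g) (t : e ⟶ f) (a : A e),
      σ f g s (σ e f t a) * α e f g s t = α e f g s t * σ e g (t ≫ s) a)
    (hreg : ∀ (e f : G) (s : e ⟶ f) (b : A f),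
      (α f e f s (Groupoid.inv s) * b = 0 → b = 0) ∧
        (b * α f e f s (Groupoid.inv s) = 0 → b = 0))
    (hmax : ∀ x : CP A,
      (∀ (e : G) (a : A e),
        catMul σ α x (catSingle (A := A) ⟨e, e, 𝟙 e⟩ a)
          = catMul σ α (catSingle (A := A) ⟨e, e, 𝟙 e⟩ a) x) →
      ∀ p : CMor G, (∀ e : G, p ≠ ⟨e, e, 𝟙 e⟩) → x p = 0) :
    ∀ I : Set (CP A), IsCrossedIdeal σ α I → (∃ x ∈ I, x ≠ 0) →
      ∃ x ∈ I, x ≠ 0 ∧ ∀ p : CMor G, (∀ e : G, p ≠ ⟨e, e, 𝟙 e⟩) → x p = 0 := by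
  classical
  intro I hI hex
  obtain ⟨x0, hx0I, hx0⟩ := hex
  have hP : ∃ n : ℕ, ∃ w, w ∈ I ∧ w ≠ 0 ∧ w.support.card = n :=
    ⟨x0.support.card, x0, hx0I, hx0, rfl⟩
  obtain ⟨x, hxI, hxne, hxcard⟩ := Nat.find_spec hP
  have hmin : ∀ w, w ∈ I → w.support.card < Nat.find hP → w = 0 := by
    intro w hw hlt
    by_contra hwne
    exact absurd (Nat.find_min' hP ⟨w, hw, hwne, rfl⟩) (Nat.not_le.mpr hlt)
  obtain ⟨p, hp⟩ := DFinsupp.ne_iff.mp hxne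
  rw [DFinsupp.zero_apply] at hp
  obtain ⟨e, f, s⟩ := p
  set y := catMul σ α x (catSingle (A := A) ⟨f, e, Groupoid.inv s⟩ 1) with hy
  have hyI : y ∈ I := (hI.2.2.2 x _ hxI).2
  have hyform : ∀ r : CMor G, y r
      = if h : f = r.1 then
          x ⟨e, r.2.1, (s ≫ eqToHom h) ≫ r.2.2⟩
            * α f e r.2.1 ((s ≫ eqToHom h) ≫ r.2.2) (Groupoid.inv s)
        else 0 := by
    intro r
    rw [hy, mul_invsingle_apply σ α e f s x r]
  have hyidf : y ⟨f, f, 𝟙 f⟩ ≠ 0 := by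
    rw [hyform ⟨f, f, 𝟙 f⟩, dif_pos rfl,
      show s ≫ eqToHom (rfl : f = f) = s from by simp, Category.comp_id]
    exact fun hz => hp ((hreg e f s _).2 hz)
  have hyne : y ≠ 0 := fun h0 => hyidf (by rw [h0]; rfl)
  have hysub : y.support.card ≤ Nat.find hP := by
    rw [← hxcard]
    refine Finset.card_le_card_of_injOn
      (fun r => if h : f = r.1 then (⟨e, r.2.1, (s ≫ eqToHom h) ≫ r.2.2⟩ : CMor G) else r)
      ?_ ?_
    · intro r hr
      have hyr := DFinsupp.mem_support_iff.mp hr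
      rw [hyform r] at hyr
      rcases _root_.em (f = r.1) with h | h
      · rw [dif_pos h] at hyr
        dsimp only
        rw [dif_pos h]
        refine DFinsupp.mem_support_iff.mpr fun h0 => hyr ?_
        rw [h0, zero_mul]
      · rw [dif_neg h] at hyr; exact absurd rfl hyr
    · have key : ∀ w ∈ y.support, f = w.1 := by
        intro w hw
        by_contra h
        have hyw := DFinsupp.mem_support_iff.mp hw
        rw [hyform w, dif_neg h] at hyw
        exact hyw rfl
      intro r hr r' hr' heq
      have h1 : f = r.1 := key r (Finset.mem_coe.mp hr)
      have h1' : f = r'.1 := key r' (Finset.mem_coe.mp hr')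
      obtain ⟨r1, r2, rm⟩ := r
      obtain ⟨r1', r2', rm'⟩ := r'
      have h2 : f = r1 := h1
      have h2' : f = r1' := h1'
      subst h2
      subst h2'
      dsimp only at heq
      rw [dif_pos rfl, dif_pos rfl] at heq
      rw [show s ≫ eqToHom (rfl : f = f) = s from by simp] at heq
      obtain ⟨-, hA⟩ := Sigma.ext_iff.mp heq
      obtain ⟨hB, hm⟩ := Sigma.ext_iff.mp (eq_of_heq hA)
      dsimp only at hB hm
      subst hB
      have hmor := eq_of_heq hm
      have hrm : rm = rm' := by
        have h3 := congrArg (fun m => Groupoid.inv s ≫ m) hmor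
        simp only [← Category.assoc, Groupoid.inv_comp, Category.id_comp] at h3
        exact h3
      rw [hrm]
  have hycard : y.support.card = Nat.find hP :=
    le_antisymm hysub (Nat.find_min' hP ⟨y, hyI, hyne, rfl⟩)
  have hcomm : ∀ (e' : G) (a : A e'),
      catMul σ α y (catSingle (A := A) ⟨e', e', 𝟙 e'⟩ a)
        = catMul σ α (catSingle (A := A) ⟨e', e', 𝟙 e'⟩ a) y := by
    intro e' a
    set z := catMul σ α y (catSingle (A := A) ⟨e', e', 𝟙 e'⟩ a)
      - catMul σ α (catSingle (A := A) ⟨e', e', 𝟙 e'⟩ a) y with hz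
    have hzI : z ∈ I := by
      have h1 := (hI.2.2.2 y (catSingle (A := A) ⟨e', e', 𝟙 e'⟩ a) hyI).2
      have h2 := (hI.2.2.2 y (catSingle (A := A) ⟨e', e', 𝟙 e'⟩ a) hyI).1
      have h3 := hI.2.1 _ _ h1 (hI.2.2.1 _ h2)
      rw [hz, sub_eq_add_neg]
      exact h3
    have hzform : ∀ r : CMor G, z r
        = (if h : e' = r.1 then y r * σ r.1 r.2.1 r.2.2 (castRH A h a) else 0)
          - (if h : r.2.1 = e' then castRH A h.symm a * y r else 0) := by
      intro r
      rw [hz, DFinsupp.sub_apply, mul_idsingle_apply σ α hα1r,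
        idsingle_mul_apply σ α hσ1 hα1l]
    have hzsub : z.support ⊆ y.support.erase ⟨f, f, 𝟙 f⟩ := by
      intro r hr
      have hzr := DFinsupp.mem_support_iff.mp hr
      rw [hzform r] at hzr
      refine Finset.mem_erase.mpr ⟨?_, ?_⟩
      · rintro rfl
        apply hzr
        rcases _root_.em (e' = f) with h | h
        · subst h
          rw [dif_pos rfl, dif_pos rfl]
          simp [hσ1, mul_comm]
        · rw [dif_neg h, dif_neg (fun hc => h hc.symm)]
          simp
      · refine DFinsupp.mem_support_iff.mpr fun h0 => hzr ?_
        rw [h0]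
        simp
    have hzcard : z.support.card < Nat.find hP := by
      calc z.support.card ≤ (y.support.erase ⟨f, f, 𝟙 f⟩).card :=
            Finset.card_le_card hzsub
        _ < y.support.card :=
            Finset.card_erase_lt_of_mem (DFinsupp.mem_support_iff.mpr hyidf)
        _ = Nat.find hP := hycard
    have hz0 : z = 0 := hmin z hzI hzcard
    exact sub_eq_zero.mp (by rw [← hz]; exact hz0)
  exact ⟨y, hyI, hyne, hmax y hcomm⟩
end
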